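/- Consider the network Σ(m) of classical conditioning gates with unit training time s, state X(t) = X̄ at an arbitrary time t with X̄ ∈ {YES, OR}^n arbitrary, and a node (p,q). Define the input value Û_{(p,q)} ∈ {0,1}^{2n₁} by dividing it into 2^{m+1−p} consecutive blocks of equal size 2^{p−1}, where block 2q−1 equals (0,0,...,0) if x_{pq}(t) = OR and (1,0,...,0) if x_{pq}(t) = YES, block 2q equals (1,0,...,0), and all other blocks equal (0,0,...,0). Then applying the constant input sequence U(τ) = Û_{(p,q)} for τ = t, t+1, ..., t+s−1 yields x_{pq}(t+s) = x̄_{pq}(t) (the flipped value of x_{pq}(t)) and x_{ij}(t+s) = x_{ij}(t) for every node (i,j) in layer p other than (p,q). -/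

import Mathlib

/-- The state of a classical conditioning gate: logical YES or logical OR. -/
inductive GateState : Type
  | YES : GateState
  | OR  : GateState
  deriving DecidableEq, Repr

/-- Output of a single classical conditioning gate:
`y = v` when the state is YES, and `y = v ∨ w` when the state is OR. -/
def gateOut : GateState → Bool → Bool → Bool
  | GateState.YES, v, _ => v
  | GateState.OR,  v, w => v || w

open Classical in
/-- A trajectory of a single classical conditioning gate with unit training time `s`,
inputs `v w : ℕ → Bool`, state `x : ℕ → GateState`, and output `y : ℕ → Bool`:
the output equation and the state-update equation of the model. -/
def GateTraj (s : ℕ) (v w : ℕ → Bool) (x : ℕ → GateState) (y : ℕ → Bool) : Prop :=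
  (∀ t : ℕ, y t = gateOut (x t) (v t) (w t)) ∧
  (∀ t : ℕ, x (t + 1) =
    if x (t + 1 - s) = GateState.YES ∧
        (∀ τ ∈ Finset.Icc (t + 1 - s) t, v τ = true ∧ w τ = true) then
      GateState.OR
    else if x (t + 1 - s) = GateState.OR ∧
        (∀ τ ∈ Finset.Icc (t + 1 - s) t, v τ = false ∧ w τ = true) then
      GateState.YES
    else
      x t)

/-- Output of node `(i,j)` of the binary-tree network `Σ(m)` of classical
conditioning gates, given the snapshot `X` of the gate states (`X i j` is the
state of node `(i,j)`, indices 1-based) and the external input `U` (1-based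
ports: `v₁ⱼ = U (2j-1)`, `w₁ⱼ = U (2j)`).  Layer `0` is, by convention, the
external ports themselves: `netY X U 0 k = U k`. -/
def netY (X : ℕ → ℕ → GateState) (U : ℕ → Bool) : ℕ → ℕ → Bool
  | 0, j => U j
  | i + 1, j => gateOut (X (i + 1) j) (netY X U i (2 * j - 1)) (netY X U i (2 * j))

/-- First input `v_{ij}` of node `(i,j)`: the output of node `(i-1, 2j-1)`
(for `i = 1`, the external port `2j-1`). -/
def nodeV (X : ℕ → ℕ → GateState) (U : ℕ → Bool) (i j : ℕ) : Bool :=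
  netY X U (i - 1) (2 * j - 1)

/-- Second input `w_{ij}` of node `(i,j)`: the output of node `(i-1, 2j)`
(for `i = 1`, the external port `2j`). -/
def nodeW (X : ℕ → ℕ → GateState) (U : ℕ → Bool) (i j : ℕ) : Bool :=
  netY X U (i - 1) (2 * j)

open Classical in
/-- A trajectory of the network `Σ(m)` of classical conditioning gates, all with
unit training time `s`: `U t k` is the external input at time `t` on port `k`
(`k = 1, …, 2^m`), and `X t i j` is the state of node `(i,j)` at time `t`
(`i = 1, …, m`, `j = 1, …, 2^(m-i)`).  Every node obeys the state-update
equation of the classical conditioning gate, its inputs being delivered by the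
outputs of the previous layer (resp. the external input, for layer 1). -/
def NetTraj (m s : ℕ) (U : ℕ → ℕ → Bool) (X : ℕ → ℕ → ℕ → GateState) : Prop :=
  ∀ i j : ℕ, 1 ≤ i → i ≤ m → 1 ≤ j → j ≤ 2 ^ (m - i) →
    ∀ t : ℕ, X (t + 1) i j =
      if X (t + 1 - s) i j = GateState.YES ∧
          (∀ τ ∈ Finset.Icc (t + 1 - s) t,
            nodeV (X τ) (U τ) i j = true ∧ nodeW (X τ) (U τ) i j = true) then
        GateState.OR
      else if X (t + 1 - s) i j = GateState.OR ∧
          (∀ τ ∈ Finset.Icc (t + 1 - s) t,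
            nodeV (X τ) (U τ) i j = false ∧ nodeW (X τ) (U τ) i j = true) then
        GateState.YES
      else
        X t i j

/-- The flipped value of a gate state. -/
def flipState : GateState → GateState
  | GateState.YES => GateState.OR
  | GateState.OR  => GateState.YES

/-- The training input value `Û_{(p,q)}` for flipping node `(p,q)` whose current
state is `xpq`: the external input (1-based ports `1, …, 2^m`) is divided into
`2^(m+1-p)` consecutive blocks of equal size `2^(p-1)`; block `2q-1` is
`(0,…,0)` if `xpq = OR` and `(1,0,…,0)` if `xpq = YES`, block `2q` is
`(1,0,…,0)`, and all other blocks are `(0,…,0)`. -/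
def Uhat (p q : ℕ) (xpq : GateState) (k : ℕ) : Bool :=
  if (k - 1) / 2 ^ (p - 1) + 1 = 2 * q - 1 then
    decide (xpq = GateState.YES) && decide ((k - 1) % 2 ^ (p - 1) = 0)
  else if (k - 1) / 2 ^ (p - 1) + 1 = 2 * q then
    decide ((k - 1) % 2 ^ (p - 1) = 0)
  else
    false


/-- Theorem 1(ii): for the network `Σ(m)` with unit training
time `s ≥ 1`, arbitrary state at an arbitrary time `t`, and any node `(p,q)`,
applying the constant input sequence `U(τ) = Û_{(p,q)}` for
`τ = t, t+1, …, t+s-1` (where `Û_{(p,q)}` is defined from the state of node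
`(p,q)` at time `t`) flips the state of node `(p,q)` at time `t+s` while
preserving the state of every other node of layer `p`. -/
lemma gateOut_false_right (x : GateState) (v : Bool) : gateOut x v false = v := by
  cases x <;> simp [gateOut]

lemma netY_seg (X : ℕ → ℕ → GateState) (U : ℕ → Bool) :
    ∀ i j, 1 ≤ j → (∀ k, (j - 1) * 2 ^ i + 1 < k → k ≤ j * 2 ^ i → U k = false) →
    netY X U i j = U ((j - 1) * 2 ^ i + 1) := by
  intro i
  induction i with
  | zero =>
    intro j hj _
    have : (j - 1) * 2 ^ 0 + 1 = j := by simp; omega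
    rw [this]; rfl
  | succ i ih =>
    intro j hj hz
    obtain ⟨j', rfl⟩ : ∃ j', j = j' + 1 := ⟨j - 1, by omega⟩
    simp only [Nat.add_sub_cancel] at hz ⊢
    have hA : 1 ≤ 2 ^ i := Nat.one_le_two_pow
    have epow : (2 : ℕ) ^ (i + 1) = 2 ^ i + 2 ^ i := by rw [pow_succ]; ring
    have eL : 2 * j' * 2 ^ i = j' * 2 ^ (i + 1) := by rw [epow]; ring
    have eM : (2 * j' + 1) * 2 ^ i = j' * 2 ^ (i + 1) + 2 ^ i := by rw [epow]; ring
    have eR : (2 * j' + 2) * 2 ^ i = (j' + 1) * 2 ^ (i + 1) := by rw [epow]; ring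
    have eR2 : (j' + 1) * 2 ^ (i + 1) = j' * 2 ^ (i + 1) + 2 ^ (i + 1) := by ring
    show gateOut _ (netY X U i (2 * (j' + 1) - 1)) (netY X U i (2 * (j' + 1))) = _
    have e1 : 2 * (j' + 1) - 1 = 2 * j' + 1 := by omega
    have e2 : 2 * (j' + 1) = 2 * j' + 2 := by omega
    rw [e1, e2]
    have hL : netY X U i (2 * j' + 1) = U (j' * 2 ^ (i + 1) + 1) := by
      rw [ih (2 * j' + 1) (by omega) (by
        intro k hk1 hk2
        simp only [Nat.add_sub_cancel] at hk1
        exact hz k (by omega) (by omega))]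
      simp only [Nat.add_sub_cancel]
      rw [eL]
    have hR : netY X U i (2 * j' + 2) = false := by
      rw [ih (2 * j' + 2) (by omega) (by
        intro k hk1 hk2
        simp only [show 2 * j' + 2 - 1 = 2 * j' + 1 from by omega] at hk1
        exact hz k (by omega) (by omega))]
      simp only [show 2 * j' + 2 - 1 = 2 * j' + 1 from by omega]
      exact hz _ (by omega) (by omega)
    rw [hL, hR, gateOut_false_right]

lemma Uhat_off (p q : ℕ) (x : GateState) (b k : ℕ) (hb : 1 ≤ b)
    (h1 : (b - 1) * 2 ^ (p - 1) + 1 < k) (h2 : k ≤ b * 2 ^ (p - 1)) :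
    Uhat p q x k = false := by
  have hA : 1 ≤ 2 ^ (p - 1) := Nat.one_le_two_pow
  have hb2 : b * 2 ^ (p - 1) = (b - 1) * 2 ^ (p - 1) + 2 ^ (p - 1) := by
    obtain ⟨b', rfl⟩ : ∃ b', b = b' + 1 := ⟨b - 1, by omega⟩
    simp only [Nat.add_sub_cancel]; ring
  obtain ⟨r, hr⟩ : ∃ r, k - 1 = (b - 1) * 2 ^ (p - 1) + r :=
    ⟨k - 1 - (b - 1) * 2 ^ (p - 1), by omega⟩
  have hr1 : 1 ≤ r := by omega
  have hr2 : r < 2 ^ (p - 1) := by omega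
  have hmod : (k - 1) % 2 ^ (p - 1) = r := by
    rw [hr, Nat.add_comm, Nat.add_mul_mod_self_right, Nat.mod_eq_of_lt hr2]
  unfold Uhat
  split_ifs <;> simp [hmod] <;> omega

lemma Uhat_first (p q : ℕ) (x : GateState) (b : ℕ) (hb : 1 ≤ b) :
    Uhat p q x ((b - 1) * 2 ^ (p - 1) + 1) =
      if b = 2 * q - 1 then decide (x = GateState.YES)
      else if b = 2 * q then true else false := by
  have hA : 0 < 2 ^ (p - 1) := Nat.pow_pos (by norm_num)
  have hd : ((b - 1) * 2 ^ (p - 1) + 1 - 1) / 2 ^ (p - 1) = b - 1 := by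
    simp [Nat.mul_div_cancel _ hA]
  have hm : ((b - 1) * 2 ^ (p - 1) + 1 - 1) % 2 ^ (p - 1) = 0 := by
    simp [Nat.mul_mod_left]
  unfold Uhat
  rw [hd, hm]
  have hb1 : b - 1 + 1 = b := by omega
  rw [hb1]
  split_ifs <;> simp

lemma node_inputs (m p q : ℕ) (hp : 1 ≤ p) (hpm : p ≤ m) (hq : 1 ≤ q)
    (x : GateState) (X : ℕ → ℕ → GateState) (U : ℕ → Bool)
    (hU : ∀ k, 1 ≤ k → k ≤ 2 ^ m → U k = Uhat p q x k)
    (j : ℕ) (hj : 1 ≤ j) (hjn : j ≤ 2 ^ (m - p)) :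
    nodeV X U p j = (if j = q then decide (x = GateState.YES) else false) ∧
    nodeW X U p j = (if j = q then true else false) := by
  have hA : 1 ≤ 2 ^ (p - 1) := Nat.one_le_two_pow
  have epow : 2 ^ 1 * 2 ^ (m - p) * 2 ^ (p - 1) = 2 ^ m := by
    rw [← pow_add, ← pow_add]; congr 1; omega
  have hbound : 2 * j * 2 ^ (p - 1) ≤ 2 ^ m := by
    rw [← epow]
    exact Nat.mul_le_mul_right _ (by simpa using Nat.mul_le_mul_left 2 hjn)
  have hVW : ∀ b, 1 ≤ b → b * 2 ^ (p - 1) ≤ 2 ^ m →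
      netY X U (p - 1) b = Uhat p q x ((b - 1) * 2 ^ (p - 1) + 1) := by
    intro b hb hble
    have hfirst : (b - 1) * 2 ^ (p - 1) + 1 ≤ b * 2 ^ (p - 1) := by
      have : b * 2 ^ (p - 1) = (b - 1) * 2 ^ (p - 1) + 2 ^ (p - 1) := by
        obtain ⟨b', rfl⟩ : ∃ b', b = b' + 1 := ⟨b - 1, by omega⟩
        simp only [Nat.add_sub_cancel]; ring
      omega
    rw [netY_seg X U (p - 1) b hb (by
      intro k hk1 hk2
      rw [hU k (by omega) (by omega)]
      exact Uhat_off p q x b k hb hk1 hk2)]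
    exact hU _ (by omega) (by omega)
  constructor
  · show netY X U (p - 1) (2 * j - 1) = _
    have h1 : (2 * j - 1) * 2 ^ (p - 1) ≤ 2 * j * 2 ^ (p - 1) :=
      Nat.mul_le_mul_right _ (by omega)
    rw [hVW (2 * j - 1) (by omega) (by omega), Uhat_first p q x _ (by omega)]
    by_cases hjq : j = q
    · simp [hjq, show 2 * q - 1 = 2 * q - 1 from rfl, show ¬(2 * q - 1 = 2 * q) from by omega]
    · simp [show ¬(2 * j - 1 = 2 * q - 1) from by omega, show ¬(2 * j - 1 = 2 * q) from by omega,
        hjq]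
  · show netY X U (p - 1) (2 * j) = _
    rw [hVW (2 * j) (by omega) hbound, Uhat_first p q x _ (by omega)]
    by_cases hjq : j = q
    · simp [hjq, show ¬(2 * q = 2 * q - 1) from by omega]
    · simp [show ¬(2 * j = 2 * q - 1) from by omega, show ¬(2 * j = 2 * q) from by omega, hjq]

theorem stmt9 (m s : ℕ) (hm : 1 ≤ m) (hs : 1 ≤ s) (p q : ℕ)
    (hp : 1 ≤ p) (hpm : p ≤ m) (hq : 1 ≤ q) (hqn : q ≤ 2 ^ (m - p))
    (U : ℕ → ℕ → Bool) (X : ℕ → ℕ → ℕ → GateState)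
    (hnet : NetTraj m s U X) (t : ℕ)
    (hU : ∀ r : ℕ, r < s → ∀ k : ℕ, 1 ≤ k → k ≤ 2 ^ m →
      U (t + r) k = Uhat p q (X t p q) k) :
    X (t + s) p q = flipState (X t p q) ∧
    ∀ j : ℕ, 1 ≤ j → j ≤ 2 ^ (m - p) → j ≠ q → X (t + s) p j = X t p j := by
  -- the inputs of every layer-p node are constant during training
  have hin : ∀ τ, t ≤ τ → τ < t + s → ∀ j, 1 ≤ j → j ≤ 2 ^ (m - p) →
      nodeV (X τ) (U τ) p j = (if j = q then decide (X t p q = GateState.YES) else false) ∧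
      nodeW (X τ) (U τ) p j = (if j = q then true else false) := by
    intro τ hτ1 hτ2 j hj hjn
    obtain ⟨r, rfl⟩ : ∃ r, τ = t + r := ⟨τ - t, by omega⟩
    exact node_inputs m p q hp hpm hq (X t p q) (X (t + r)) (U (t + r))
      (fun k hk1 hk2 => hU r (by omega) k hk1 hk2) j hj hjn
  constructor
  · -- node (p,q) flips
    obtain ⟨s', rfl⟩ : ∃ s', s = s' + 1 := ⟨s - 1, by omega⟩
    have hnq := hnet p q hp hpm hq hqn (t + s')
    have e1 : t + s' + 1 - (s' + 1) = t := by omega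
    have e2 : t + (s' + 1) = t + s' + 1 := by omega
    rw [e2, hnq, e1]
    have hall : ∀ τ ∈ Finset.Icc t (t + s'),
        nodeV (X τ) (U τ) p q = decide (X t p q = GateState.YES) ∧
        nodeW (X τ) (U τ) p q = true := by
      intro τ hτ
      rw [Finset.mem_Icc] at hτ
      have := hin τ hτ.1 (by omega) q hq hqn
      simpa using this
    cases hx : X t p q with
    | YES =>
      rw [if_pos]
      · rfl
      · refine ⟨rfl, fun τ hτ => ?_⟩
        have := hall τ hτ
        rw [hx] at this
        simpa using this
    | OR =>
      rw [if_neg, if_pos]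
      · rfl
      · refine ⟨rfl, fun τ hτ => ?_⟩
        have := hall τ hτ
        rw [hx] at this
        simpa using this
      · rintro ⟨h1, -⟩
        exact absurd h1 (by simp)
  · -- other layer-p nodes keep their state
    intro j hj hjn hjq
    suffices h : ∀ r, r ≤ s → X (t + r) p j = X t p j from h s le_rfl
    intro r
    induction r with
    | zero => intro _; rfl
    | succ r ih =>
      intro hr
      have hnj := hnet p j hp hpm hj hjn (t + r)
      have e2 : t + (r + 1) = t + r + 1 := by omega
      rw [e2, hnj]
      have hw : nodeW (X (t + r)) (U (t + r)) p j = false := by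
        have := (hin (t + r) (by omega) (by omega) j hj hjn).2
        simpa [hjq] using this
      have hmem : t + r ∈ Finset.Icc (t + r + 1 - s) (t + r) := by
        rw [Finset.mem_Icc]; omega
      rw [if_neg, if_neg]
      · exact ih (by omega)
      · rintro ⟨-, h2⟩
        have := (h2 (t + r) hmem).2
        rw [hw] at this; exact absurd this (by simp)
      · rintro ⟨-, h2⟩
        have := (h2 (t + r) hmem).2
        rw [hw] at this; exact absurd this (by simp)
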